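/- Let ρ ∈ (0, π/2) and let σ_ρ : [0,1] → S² be defined by σ_ρ(t) = cos ρ · (cos ρ, 0, sin ρ) + sin ρ · (sin ρ cos(2πt), sin(2πt), −cos ρ cos(2πt)). Then σ_ρ is convex: for every nonzero h ∈ ℝ³, σ_ρ intersects the hyperplane {x ∈ ℝ³ : h·x = 0} with total multiplicity at most 2 on (0,1). -/

import Mathlib

open Set Real

/-- The Euclidean dot product on `ℝ^k`. -/
def dotv {k : ℕ} (v w : Fin k → ℝ) : ℝ := ∑ i, v i * w i

/-- The curve `γ` intersects the hyperplane `{x : h·x = 0}` with total multiplicity at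
most `N` on the open interval `(a,b)`: for any distinct points `t₁, …, t_j ∈ (a,b)` and
positive integers `m₁, …, m_j` such that `f = h·γ` vanishes at `t_i` together with its
first `m_i − 1` derivatives, one has `m₁ + ⋯ + m_j ≤ N`. -/
def MultAtMost {k : ℕ} (γ : ℝ → Fin k → ℝ) (a b : ℝ) (h : Fin k → ℝ) (N : ℕ) : Prop :=
  ∀ (j : ℕ) (t : Fin j → ℝ) (m : Fin j → ℕ),
    (∀ i, t i ∈ Ioo a b) → Function.Injective t → (∀ i, 1 ≤ m i) →
    (∀ i, ∀ l < m i, iteratedDeriv l (fun s => dotv h (γ s)) (t i) = 0) →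
    ∑ i, m i ≤ N

/-- The circle `σ_ρ(t) = cos ρ (cos ρ, 0, sin ρ) + sin ρ (sin ρ cos 2πt, sin 2πt, −cos ρ cos 2πt)`. -/
noncomputable def sigmaC (ρ : ℝ) (t : ℝ) : Fin 3 → ℝ :=
  ![Real.cos ρ * Real.cos ρ + Real.sin ρ * (Real.sin ρ * Real.cos (2 * π * t)),
    Real.sin ρ * Real.sin (2 * π * t),
    Real.cos ρ * Real.sin ρ + Real.sin ρ * (-(Real.cos ρ) * Real.cos (2 * π * t))]

/-- sin of π times a nonzero number in (-1,1) is nonzero. -/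
lemma sin_pi_mul_ne {d : ℝ} (h1 : -1 < d) (h2 : d < 1) (h0 : d ≠ 0) :
    Real.sin (π * d) ≠ 0 := by
  have hπ := Real.pi_pos
  intro h
  rw [Real.sin_eq_zero_iff_of_lt_of_lt (by nlinarith) (by nlinarith)] at h
  have : d = 0 := by
    rcases mul_eq_zero.1 h with h' | h'
    · exact absurd h' (ne_of_gt hπ)
    · exact h'
  exact h0 this

/-- From two zeros, the "mid-angle" relation. -/
lemma pair_rel {A B C ta tb : ℝ} (ha : ta ∈ Ioo (0:ℝ) 1) (hb : tb ∈ Ioo (0:ℝ) 1)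
    (hab : ta ≠ tb)
    (ea : A + B * Real.cos (2*π*ta) + C * Real.sin (2*π*ta) = 0)
    (eb : A + B * Real.cos (2*π*tb) + C * Real.sin (2*π*tb) = 0) :
    C * Real.cos (π*(ta+tb)) = B * Real.sin (π*(ta+tb)) := by
  have hc := Real.cos_sub_cos (2*π*ta) (2*π*tb)
  have hs := Real.sin_sub_sin (2*π*ta) (2*π*tb)
  have h1 : (2*π*ta + 2*π*tb)/2 = π*(ta+tb) := by ring
  have h2 : (2*π*ta - 2*π*tb)/2 = π*(ta-tb) := by ring
  rw [h1, h2] at hc hs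
  have key : Real.sin (π*(ta-tb)) *
      (C * Real.cos (π*(ta+tb)) - B * Real.sin (π*(ta+tb))) = 0 := by
    linear_combination (ea - eb)/2 - B/2 * hc - C/2 * hs
  have hne : Real.sin (π*(ta-tb)) ≠ 0 := by
    apply sin_pi_mul_ne
    · have := ha.1; have := hb.2; linarith
    · have := ha.2; have := hb.1; linarith
    · exact sub_ne_zero.2 hab
  have := (mul_eq_zero.1 key).resolve_left hne
  linarith

/-- Three distinct zeros in (0,1) force A = B = C = 0. -/
lemma three_zeros {A B C t1 t2 t3 : ℝ}
    (h1 : t1 ∈ Ioo (0:ℝ) 1) (h2 : t2 ∈ Ioo (0:ℝ) 1) (h3 : t3 ∈ Ioo (0:ℝ) 1)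
    (n12 : t1 ≠ t2) (n13 : t1 ≠ t3) (n23 : t2 ≠ t3)
    (e1 : A + B * Real.cos (2*π*t1) + C * Real.sin (2*π*t1) = 0)
    (e2 : A + B * Real.cos (2*π*t2) + C * Real.sin (2*π*t2) = 0)
    (e3 : A + B * Real.cos (2*π*t3) + C * Real.sin (2*π*t3) = 0) :
    A = 0 ∧ B = 0 ∧ C = 0 := by
  have p12 := pair_rel h1 h2 n12 e1 e2
  have p13 := pair_rel h1 h3 n13 e1 e3
  set u := π*(t1+t2) with hu
  set v := π*(t1+t3) with hv
  have hsin : Real.sin (u - v) = Real.sin u * Real.cos v - Real.cos u * Real.sin v :=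
    Real.sin_sub u v
  have huv : u - v = π*(t2 - t3) := by rw [hu, hv]; ring
  have hne : Real.sin (u - v) ≠ 0 := by
    rw [huv]
    apply sin_pi_mul_ne
    · have := h2.1; have := h3.2; linarith
    · have := h2.2; have := h3.1; linarith
    · exact sub_ne_zero.2 n23
  have hB : B * Real.sin (u - v) = 0 := by
    rw [hsin]; linear_combination Real.cos u * p13 - Real.cos v * p12
  have hC : C * Real.sin (u - v) = 0 := by
    rw [hsin]; linear_combination Real.sin u * p13 - Real.sin v * p12
  have hB0 : B = 0 := (mul_eq_zero.1 hB).resolve_right hne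
  have hC0 : C = 0 := (mul_eq_zero.1 hC).resolve_right hne
  refine ⟨?_, hB0, hC0⟩
  rw [hB0, hC0] at e1; linarith [e1]

/-- A double zero plus any zero at t forces t = t0 (given not all coeffs zero). -/
lemma double_zero {A B C t0 t : ℝ} (h0 : t0 ∈ Ioo (0:ℝ) 1) (ht : t ∈ Ioo (0:ℝ) 1)
    (e0 : A + B * Real.cos (2*π*t0) + C * Real.sin (2*π*t0) = 0)
    (d0 : C * Real.cos (2*π*t0) - B * Real.sin (2*π*t0) = 0)
    (hABC : ¬(A = 0 ∧ B = 0 ∧ C = 0))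
    (e : A + B * Real.cos (2*π*t) + C * Real.sin (2*π*t) = 0) :
    t = t0 := by
  have hπ := Real.pi_pos
  set x := 2*π*t - 2*π*t0 with hx
  have hrw : 2*π*t = 2*π*t0 + x := by rw [hx]; ring
  rw [hrw, Real.cos_add, Real.sin_add] at e
  have key : A * (1 - Real.cos x) = 0 := by linear_combination e - Real.cos x * e0 - Real.sin x * d0
  have hA : A ≠ 0 := by
    intro hA0
    apply hABC
    refine ⟨hA0, ?_, ?_⟩
    · rw [hA0] at e0
      linear_combination Real.cos (2*π*t0) * e0 - Real.sin (2*π*t0) * d0 -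
        B * (Real.sin_sq_add_cos_sq (2*π*t0))
    · rw [hA0] at e0
      linear_combination Real.sin (2*π*t0) * e0 + Real.cos (2*π*t0) * d0 -
        C * (Real.sin_sq_add_cos_sq (2*π*t0))
  have hcos : Real.cos x = 1 := by
    rcases mul_eq_zero.1 key with h' | h'
    · exact absurd h' hA
    · linarith
  have hx0 : x = 0 := by
    have hb1 : -(2*π) < x := by
      have := ht.1; have := h0.2; rw [hx]; nlinarith
    have hb2 : x < 2*π := by
      have := ht.2; have := h0.1; rw [hx]; nlinarith
    exact (Real.cos_eq_one_iff_of_lt_of_lt hb1 hb2).1 hcos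
  have : 2*π*t = 2*π*t0 := by rw [hx] at hx0; linarith
  have h2π : (2:ℝ)*π ≠ 0 := by positivity
  exact mul_left_cancel₀ h2π this

/-- Triple zero forces all coefficients zero. -/
lemma triple_zero {A B C θ : ℝ}
    (e0 : A + B * Real.cos θ + C * Real.sin θ = 0)
    (d0 : C * Real.cos θ - B * Real.sin θ = 0)
    (dd0 : B * Real.cos θ + C * Real.sin θ = 0) :
    A = 0 ∧ B = 0 ∧ C = 0 := by
  have hB : B = 0 := by
    linear_combination Real.cos θ * dd0 - Real.sin θ * d0 - B * (Real.sin_sq_add_cos_sq θ)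
  have hC : C = 0 := by
    linear_combination Real.sin θ * dd0 + Real.cos θ * d0 - C * (Real.sin_sq_add_cos_sq θ)
  have hA : A = 0 := by rw [hB, hC] at e0; linarith
  exact ⟨hA, hB, hC⟩

lemma hasDeriv_trig (A B C s : ℝ) :
    HasDerivAt (fun u : ℝ => A + B * Real.cos (2*π*u) + C * Real.sin (2*π*u))
      (2*π*(C * Real.cos (2*π*s) - B * Real.sin (2*π*s))) s := by
  have h1 : HasDerivAt (fun u : ℝ => 2*π*u) (2*π) s := by
    simpa using (hasDerivAt_id s).const_mul (2*π)
  have := ((hasDerivAt_const s A).add (h1.cos.const_mul B)).add (h1.sin.const_mul C)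
  refine this.congr_deriv ?_
  ring

lemma deriv_trig (A B C : ℝ) :
    deriv (fun u : ℝ => A + B * Real.cos (2*π*u) + C * Real.sin (2*π*u))
      = fun s => 0 + (2*π*C) * Real.cos (2*π*s) + (-(2*π)*B) * Real.sin (2*π*s) := by
  funext s
  rw [(hasDeriv_trig A B C s).deriv]
  ring

/-- For `ρ ∈ (0, π/2)` the circle `σ_ρ : [0,1] → S²` is convex: it
meets every hyperplane through the origin with total multiplicity at most 2 on `(0,1)`. -/
theorem stmt_12 (ρ : ℝ) (hρ : ρ ∈ Ioo 0 (π / 2)) :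
    ∀ h : Fin 3 → ℝ, h ≠ 0 → MultAtMost (sigmaC ρ) 0 1 h 2 := by
  have hπ := Real.pi_pos
  obtain ⟨hρ0, hρ1⟩ := hρ
  have hsρ : Real.sin ρ > 0 := Real.sin_pos_of_pos_of_lt_pi hρ0 (by linarith)
  have hcρ : Real.cos ρ > 0 := Real.cos_pos_of_mem_Ioo ⟨by linarith, hρ1⟩
  intro h hne
  unfold MultAtMost
  intro j t m ht hinj hm hder
  set A := h 0 * (Real.cos ρ * Real.cos ρ) + h 2 * (Real.sin ρ * Real.cos ρ) with hAdef
  set B := h 0 * (Real.sin ρ * Real.sin ρ) - h 2 * (Real.sin ρ * Real.cos ρ) with hBdef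
  set C := h 1 * Real.sin ρ with hCdef
  have hABC : ¬(A = 0 ∧ B = 0 ∧ C = 0) := by
    rintro ⟨hA0, hB0, hC0⟩
    apply hne
    have h0 : h 0 = 0 := by
      have hsq := Real.sin_sq_add_cos_sq ρ
      nlinarith [hA0, hB0]
    have h2 : h 2 = 0 := by
      rw [hAdef, h0] at hA0
      have : Real.sin ρ * Real.cos ρ > 0 := mul_pos hsρ hcρ
      nlinarith
    have h1 : h 1 = 0 := by
      rw [hCdef] at hC0
      rcases mul_eq_zero.1 hC0 with h' | h'
      · exact h'
      · exact absurd h' (ne_of_gt hsρ)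
    funext i
    fin_cases i <;> simp [h0, h1, h2]
  have hFeq : (fun s => dotv h (sigmaC ρ s))
      = fun s => A + B * Real.cos (2*π*s) + C * Real.sin (2*π*s) := by
    funext s
    simp only [dotv, sigmaC, Fin.sum_univ_three, Matrix.cons_val_zero, Matrix.cons_val_one,
      Matrix.head_cons, Matrix.cons_val_two, Matrix.tail_cons]
    rw [hAdef, hBdef, hCdef]
    ring
  rw [hFeq] at hder
  -- zero conditions
  have hz : ∀ i, A + B * Real.cos (2*π*(t i)) + C * Real.sin (2*π*(t i)) = 0 := by
    intro i
    have := hder i 0 (hm i)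
    simpa [iteratedDeriv_zero] using this
  have hz1 : ∀ i, 2 ≤ m i → C * Real.cos (2*π*(t i)) - B * Real.sin (2*π*(t i)) = 0 := by
    intro i hi
    have := hder i 1 hi
    rw [iteratedDeriv_one, (hasDeriv_trig A B C (t i)).deriv] at this
    have h2π : (0:ℝ) < 2*π := by positivity
    rcases mul_eq_zero.1 this with h' | h'
    · exact absurd h' (ne_of_gt h2π)
    · exact h'
  have hz2 : ∀ i, ¬ (3 ≤ m i) := by
    intro i hi
    have hd2 := hder i 2 hi
    rw [iteratedDeriv_succ, iteratedDeriv_one, deriv_trig] at hd2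
    rw [(hasDeriv_trig 0 (2*π*C) (-(2*π)*B) (t i)).deriv] at hd2
    have h2π : (0:ℝ) < 2*π := by positivity
    have hdd : B * Real.cos (2*π*(t i)) + C * Real.sin (2*π*(t i)) = 0 := by
      rcases mul_eq_zero.1 hd2 with h' | h'
      · exact absurd h' (ne_of_gt h2π)
      · nlinarith [h']
    exact hABC (triple_zero (hz i) (hz1 i (by omega)) hdd)
  have hm2 : ∀ i, m i ≤ 2 := fun i => by
    by_contra hcon; exact hz2 i (by omega)
  by_cases hdub : ∃ i0, 2 ≤ m i0
  · obtain ⟨i0, hi0⟩ := hdub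
    have huniq : ∀ i, i = i0 := by
      intro i
      apply hinj
      exact double_zero (ht i0) (ht i) (hz i0) (hz1 i0 hi0) hABC (hz i)
    have hjuniv : (Finset.univ : Finset (Fin j)) = {i0} := by
      apply Finset.eq_singleton_iff_unique_mem.2
      exact ⟨Finset.mem_univ _, fun x _ => huniq x⟩
    rw [hjuniv, Finset.sum_singleton]
    exact hm2 i0
  · push_neg at hdub
    have hm1 : ∀ i, m i = 1 := fun i => by have := hm i; have := hdub i; omega
    have hsum : ∑ i, m i = j := by
      rw [Finset.sum_congr rfl (fun i _ => hm1 i)]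
      simp
    rw [hsum]
    by_contra hcon
    push_neg at hcon
    have hj3 : 3 ≤ j := hcon
    set i0 : Fin j := ⟨0, by omega⟩
    set i1 : Fin j := ⟨1, by omega⟩
    set i2 : Fin j := ⟨2, by omega⟩
    have n01 : t i0 ≠ t i1 := fun he => by
      have := hinj he; simp [i0, i1, Fin.ext_iff] at this
    have n02 : t i0 ≠ t i2 := fun he => by
      have := hinj he; simp [i0, i2, Fin.ext_iff] at this
    have n12 : t i1 ≠ t i2 := fun he => by
      have := hinj he; simp [i1, i2, Fin.ext_iff] at this
    exact hABC (three_zeros (ht i0) (ht i1) (ht i2) n01 n02 n12 (hz i0) (hz i1) (hz i2))
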